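/- Let k ≥ 1 and let a_1 > a_2 > … > a_k and b_1 < b_2 < … < b_k be integers. Then Σ_{t=1}^{k} |b_t − a_t| ≥ ⌊k²/2⌋. -/

import Mathlib

open Finset

private lemma gap_lemma (k : ℕ) (b : ℕ → ℤ)
    (hb : ∀ s t : ℕ, 1 ≤ s → s < t → t ≤ k → b s < b t) :
    ∀ s t : ℕ, 1 ≤ s → s ≤ t → t ≤ k → (t : ℤ) - s ≤ b t - b s := by
  intro s t hs hst htk
  induction t, hst using Nat.le_induction with
  | base => simp
  | succ t ht ih =>
    have h1 : b t < b (t + 1) := hb t (t + 1) (by omega) (by omega) htk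
    have h2 := ih (by omega)
    push_cast
    omega

private lemma sumabs (k : ℕ) :
    ∑ t ∈ Finset.Icc 1 k, |(k : ℤ) + 1 - 2 * t| = ((k ^ 2 / 2 : ℕ) : ℤ) := by
  induction k using Nat.strong_induction_on with
  | _ k ih =>
    match k with
    | 0 => simp
    | 1 => norm_num
    | (n + 2) =>
      have h := ih n (by omega)
      have hsplit : Finset.Icc 1 (n + 2) = insert 1 (insert (n + 2) (Finset.Icc 2 (n + 1))) := by
        ext x; simp [Finset.mem_insert, Finset.mem_Icc]; omega
      rw [hsplit, Finset.sum_insert (by simp only [Finset.mem_insert, Finset.mem_Icc]; omega),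
        Finset.sum_insert (by simp only [Finset.mem_Icc]; omega)]
      have hre : ∑ t ∈ Finset.Icc 2 (n + 1), |(n : ℤ) + 2 + 1 - 2 * t|
          = ∑ t ∈ Finset.Icc 1 n, |(n : ℤ) + 1 - 2 * t| := by
        apply Finset.sum_nbij' (fun t => t - 1) (fun t => t + 1) <;>
            simp only [Finset.mem_Icc] <;> intro t ht <;> try omega
        all_goals
          have hc : ((t - 1 : ℕ) : ℤ) = (t : ℤ) - 1 := by omega
          rw [hc]; ring_nf
      push_cast
      rw [hre, h]
      have e1 : |(n : ℤ) + 2 + 1 - 2| = n + 1 := by rw [abs_of_nonneg] <;> omega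
      have e2 : |(n : ℤ) + 2 + 1 - 2 * ((n : ℤ) + 2)| = n + 1 := by
        rw [abs_of_nonpos] <;> omega
      have e3 : ((n ^ 2 / 2 : ℕ) : ℤ) = ((n : ℤ) ^ 2) / 2 := by push_cast; ring_nf
      have hc : ((n : ℤ) + 2) ^ 2 = (n : ℤ) ^ 2 + 4 * n + 4 := by ring
      rw [e1, e2, e3, hc]
      generalize (n : ℤ) ^ 2 = c
      omega

theorem sum_abs_ge_of_opposite_monotone (k : ℕ) (hk : 1 ≤ k) (a b : ℕ → ℤ)
    (ha : ∀ s t : ℕ, 1 ≤ s → s < t → t ≤ k → a t < a s)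
    (hb : ∀ s t : ℕ, 1 ≤ s → s < t → t ≤ k → b s < b t) :
    ((k ^ 2 / 2 : ℕ) : ℤ) ≤ ∑ t ∈ Finset.Icc 1 k, |b t - a t| := by
  set f : ℕ → ℤ := fun t => |b t - a t| with hf
  have hga := gap_lemma k (fun n => -a n) (by intro s t hs hst htk; simpa using ha s t hs hst htk)
  have hgb := gap_lemma k b hb
  -- pairing bound
  have key : ∀ t ∈ Finset.Icc 1 k, 2 * |(k : ℤ) + 1 - 2 * t| ≤ f t + f (k + 1 - t) := by
    intro t ht
    simp only [Finset.mem_Icc] at ht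
    obtain ⟨u, hu⟩ : ∃ u, u = k + 1 - t := ⟨_, rfl⟩
    rw [← hu]
    have hucast : (u : ℤ) = (k : ℤ) + 1 - t := by omega
    rcases le_or_gt t u with h | h
    · have h1 := hgb t u ht.1 h (by omega)
      have h2 := hga t u ht.1 h (by omega)
      have habs : |(k : ℤ) + 1 - 2 * t| = (u : ℤ) - t := by
        rw [abs_of_nonneg] <;> omega
      have hb1 : (b u - a u) - (b t - a t) ≤ f t + f u := by
        have := abs_le_abs (le_refl (b u - a u)) -- dummy
        calc (b u - a u) - (b t - a t) ≤ |(b u - a u) - (b t - a t)| := le_abs_self _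
          _ ≤ |b u - a u| + |b t - a t| := abs_sub _ _
          _ = f t + f u := by rw [hf]; ring
      try simp only at h2
      rw [habs]; linarith
    · have h1 := hgb u t (by omega) (by omega) ht.2
      have h2 := hga u t (by omega) (by omega) ht.2
      have habs : |(k : ℤ) + 1 - 2 * t| = (t : ℤ) - u := by
        rw [abs_of_nonpos] <;> omega
      have hb1 : (b t - a t) - (b u - a u) ≤ f t + f u := by
        calc (b t - a t) - (b u - a u) ≤ |(b t - a t) - (b u - a u)| := le_abs_self _
          _ ≤ |b t - a t| + |b u - a u| := abs_sub _ _
          _ = f t + f u := by rw [hf]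
      try simp only at h2
      rw [habs]; linarith
  have hrefl : ∑ t ∈ Finset.Icc 1 k, f (k + 1 - t) = ∑ t ∈ Finset.Icc 1 k, f t := by
    apply Finset.sum_nbij' (fun t => k + 1 - t) (fun t => k + 1 - t) <;>
        simp only [Finset.mem_Icc] <;> intro t ht <;> try omega
    all_goals trivial
  have hsum : 2 * ∑ t ∈ Finset.Icc 1 k, |(k : ℤ) + 1 - 2 * t|
      ≤ 2 * ∑ t ∈ Finset.Icc 1 k, f t := by
    calc 2 * ∑ t ∈ Finset.Icc 1 k, |(k : ℤ) + 1 - 2 * t|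
        = ∑ t ∈ Finset.Icc 1 k, 2 * |(k : ℤ) + 1 - 2 * t| := by rw [Finset.mul_sum]
      _ ≤ ∑ t ∈ Finset.Icc 1 k, (f t + f (k + 1 - t)) := Finset.sum_le_sum key
      _ = ∑ t ∈ Finset.Icc 1 k, f t + ∑ t ∈ Finset.Icc 1 k, f (k + 1 - t) := Finset.sum_add_distrib
      _ = 2 * ∑ t ∈ Finset.Icc 1 k, f t := by rw [hrefl]; ring
  rw [← sumabs k]
  linarith
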